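/- The vector field F₉(x,y,z) = (0, −xy, xz) on ℝ³ is complete: the integral curve with initial condition (x₀,y₀,z₀) is t ↦ (x₀, y₀e^{−x₀t}, z₀e^{x₀t}), defined for all t ∈ ℝ, and it is unbounded whenever x₀ ≠ 0 and (y₀ ≠ 0 or z₀ ≠ 0). -/

import Mathlib

/-- The geodesic field `F₉` of `Q₉` on `h(−1)`: `(0, −xy, xz)`. -/
def F9sol (v : Fin 3 → ℝ) : Fin 3 → ℝ := ![0, -(v 0 * v 1), v 0 * v 2]

lemma exp_unbounded (a b C : ℝ) (ha : a ≠ 0) (hb : b ≠ 0)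
    (h : ∀ t : ℝ, |b * Real.exp (a * t)| ≤ C) : False := by
  have hb' : 0 < |b| := abs_pos.mpr hb
  have hC0 : |b| ≤ C := by simpa using h 0
  set s := Real.log ((C + 1) / |b|) with hs
  have hpos : 0 < (C + 1) / |b| := div_pos (by linarith) hb'
  have := h (s / a)
  rw [mul_div_cancel₀ _ ha, abs_mul, Real.abs_exp, hs, Real.exp_log hpos,
    mul_div_cancel₀ _ (ne_of_gt hb')] at this
  linarith

/-- `F₉` is complete: the integral curve through `(x₀,y₀,z₀)` is
`t ↦ (x₀, y₀e^{−x₀t}, z₀e^{x₀t})`, defined for all `t`, and it is unbounded whenever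
`x₀ ≠ 0` and (`y₀ ≠ 0` or `z₀ ≠ 0`). -/
theorem stmt_16 (x₀ y₀ z₀ : ℝ) :
    (fun t : ℝ => (![x₀, y₀ * Real.exp (-x₀ * t), z₀ * Real.exp (x₀ * t)] : Fin 3 → ℝ)) 0
      = ![x₀, y₀, z₀] ∧
    (∀ t : ℝ, HasDerivAt
      (fun t : ℝ => (![x₀, y₀ * Real.exp (-x₀ * t), z₀ * Real.exp (x₀ * t)] : Fin 3 → ℝ))
      (F9sol ![x₀, y₀ * Real.exp (-x₀ * t), z₀ * Real.exp (x₀ * t)]) t) ∧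
    (x₀ ≠ 0 → (y₀ ≠ 0 ∨ z₀ ≠ 0) →
      ¬ ∃ C, ∀ t : ℝ,
        ‖(![x₀, y₀ * Real.exp (-x₀ * t), z₀ * Real.exp (x₀ * t)] : Fin 3 → ℝ)‖ ≤ C) := by
  refine ⟨?_, ?_, ?_⟩
  · funext i
    fin_cases i <;> simp
  · intro t
    rw [hasDerivAt_pi]
    intro i
    fin_cases i
    · simpa [F9sol] using hasDerivAt_const t x₀
    · have h : HasDerivAt (fun t : ℝ => y₀ * Real.exp (-x₀ * t))
        (y₀ * (Real.exp (-x₀ * t) * (-x₀))) t := by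
        simpa using (((hasDerivAt_id t).const_mul (-x₀)).exp).const_mul y₀
      simpa [F9sol, mul_comm, mul_assoc, mul_left_comm] using h
    · have h : HasDerivAt (fun t : ℝ => z₀ * Real.exp (x₀ * t))
        (z₀ * (Real.exp (x₀ * t) * x₀)) t := by
        simpa using (((hasDerivAt_id t).const_mul x₀).exp).const_mul z₀
      simpa [F9sol, mul_comm, mul_assoc, mul_left_comm] using h
  · intro hx hyz ⟨C, hC⟩
    rcases hyz with hy | hz
    · refine exp_unbounded (-x₀) y₀ C (neg_ne_zero.mpr hx) hy (fun t => ?_)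
      have := (norm_le_pi_norm (![x₀, y₀ * Real.exp (-x₀ * t), z₀ * Real.exp (x₀ * t)] : Fin 3 → ℝ) 1).trans (hC t)
      simpa [abs_mul, Real.abs_exp] using this
    · refine exp_unbounded x₀ z₀ C hx hz (fun t => ?_)
      have := (norm_le_pi_norm (![x₀, y₀ * Real.exp (-x₀ * t), z₀ * Real.exp (x₀ * t)] : Fin 3 → ℝ) 2).trans (hC t)
      simpa [abs_mul, Real.abs_exp] using this
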